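/- For c > 0, μ > 0, σ > 0: σ∫₀^c (1/√y)·φ(√y·μ/σ) dy + (μ/2)∫₀^c erfc(−√(y/2)·μ/σ) dy = cμ/2 + σ√c·φ(√c·μ/σ) + ((cμ² + σ²)/(2μ))·erf(√(c/2)·μ/σ), where φ is the standard normal density and erf, erfc the error and complementary error functions. -/

import Mathlib

open MeasureTheory Real Set intervalIntegral

/-- standard normal density -/
noncomputable def stdNormal (z : ℝ) : ℝ := (1 / Real.sqrt (2 * Real.pi)) * Real.exp (-z ^ 2 / 2)

/-- error function -/
noncomputable def erf (x : ℝ) : ℝ := (2 / Real.sqrt Real.pi) * ∫ u in (0 : ℝ)..x, Real.exp (-u ^ 2)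

/-- complementary error function -/
noncomputable def erfc (x : ℝ) : ℝ := (2 / Real.sqrt Real.pi) * ∫ u in Set.Ioi x, Real.exp (-u ^ 2)

lemma gauss_cont : Continuous fun u : ℝ => Real.exp (-u ^ 2) := by continuity

lemma gauss_integrable : Integrable fun u : ℝ => Real.exp (-u ^ 2) := by
  have := integrable_exp_neg_mul_sq (b := 1) one_pos
  simpa using this

lemma erf_hasDerivAt (x : ℝ) :
    HasDerivAt erf (2 / Real.sqrt Real.pi * Real.exp (-x ^ 2)) x := by
  have h : HasDerivAt (fun x => ∫ u in (0:ℝ)..x, Real.exp (-u ^ 2)) (Real.exp (-x ^ 2)) x := by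
    apply intervalIntegral.integral_hasDerivAt_right
    · exact gauss_cont.intervalIntegrable _ _
    · exact gauss_cont.stronglyMeasurableAtFilter _ _
    · exact gauss_cont.continuousAt
  exact h.const_mul (2 / Real.sqrt Real.pi)

lemma erf_continuous : Continuous erf := by
  rw [continuous_iff_continuousAt]
  exact fun x => (erf_hasDerivAt x).differentiableAt.continuousAt

lemma erf_zero : erf 0 = 0 := by simp [erf]

lemma erf_neg (x : ℝ) : erf (-x) = - erf x := by
  unfold erf
  have h : (∫ u in (0:ℝ)..(-x), Real.exp (-u ^ 2)) = - ∫ u in (0:ℝ)..x, Real.exp (-u ^ 2) := by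
    have h := intervalIntegral.integral_comp_neg (a := (0:ℝ)) (b := x)
      (fun u => Real.exp (-u ^ 2))
    simp only [neg_sq, neg_zero] at h
    rw [intervalIntegral.integral_symm 0 (-x)] at h
    linarith
  rw [h]; ring

lemma erfc_eq (x : ℝ) : erfc x = 1 - erf x := by
  unfold erfc erf
  have hI : (∫ u in Set.Ioi x, Real.exp (-u ^ 2))
      = (∫ u in Set.Ioi (0:ℝ), Real.exp (-u ^ 2)) - ∫ u in (0:ℝ)..x, Real.exp (-u ^ 2) := by
    have key : ∀ b : ℝ, (∫ u in Set.Ioi b, Real.exp (-u ^ 2))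
        = (∫ u : ℝ, Real.exp (-u ^ 2)) - ∫ u in Set.Iic b, Real.exp (-u ^ 2) := by
      intro b
      rw [← intervalIntegral.integral_Iic_add_Ioi (b := b) gauss_integrable.integrableOn
        gauss_integrable.integrableOn]
      ring
    have hsub : (∫ u in (0:ℝ)..x, Real.exp (-u ^ 2))
        = (∫ u in Set.Iic x, Real.exp (-u ^ 2)) - ∫ u in Set.Iic (0:ℝ), Real.exp (-u ^ 2) :=
      (intervalIntegral.integral_Iic_sub_Iic gauss_integrable.integrableOn
        gauss_integrable.integrableOn).symm
    rw [key x, key 0, hsub]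
    ring
  rw [hI, mul_sub]
  congr 1
  have h0 : (∫ u in Set.Ioi (0:ℝ), Real.exp (-u ^ 2)) = Real.sqrt Real.pi / 2 := by
    have := integral_gaussian_Ioi 1
    simpa using this
  rw [h0]
  have hπ : Real.sqrt Real.pi ≠ 0 := by positivity
  field_simp



lemma erf_comp_hasDerivAt {μ σ : ℝ} (hμ : 0 < μ) (hσ : 0 < σ) {y : ℝ} (hy : 0 < y) :
    HasDerivAt (fun y => erf (Real.sqrt (y/2) * μ / σ))
      ((1 / Real.sqrt y) * ((μ/σ) * (1 / Real.sqrt (2*Real.pi))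
        * Real.exp (-(y * (μ/σ)^2) / 2))) y := by
  have h1 : HasDerivAt (fun y : ℝ => y/2) (1/2) y := (hasDerivAt_id y).div_const 2
  have h2 : HasDerivAt (fun y : ℝ => Real.sqrt (y/2)) (1 / (2 * Real.sqrt (y/2)) * (1/2)) y :=
    (Real.hasDerivAt_sqrt (by positivity)).comp y h1
  have h3 := (h2.mul_const μ).div_const σ
  have h4 := (erf_hasDerivAt (Real.sqrt (y/2) * μ / σ)).comp y h3
  refine h4.congr_deriv ?_
  symm
  have hexp : (Real.sqrt (y/2) * μ / σ) ^ 2 = (y * (μ/σ)^2) / 2 := by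
    rw [div_pow, mul_pow, Real.sq_sqrt (by positivity : (0:ℝ) ≤ y/2)]
    field_simp
  rw [hexp]
  have hs : Real.sqrt (y/2) = Real.sqrt y / Real.sqrt 2 := Real.sqrt_div hy.le 2
  have h2π : Real.sqrt (2*Real.pi) = Real.sqrt 2 * Real.sqrt Real.pi :=
    Real.sqrt_mul (by norm_num) _
  have hy0 : Real.sqrt y ≠ 0 := by positivity
  have h20 : Real.sqrt 2 ≠ 0 := by positivity
  have hπ0 : Real.sqrt Real.pi ≠ 0 := by positivity
  have h22 : Real.sqrt 2 * Real.sqrt 2 = 2 := Real.mul_self_sqrt (by norm_num)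
  rw [hs, h2π]
  field_simp
  ring_nf
  rw [Real.sq_sqrt (by norm_num : (0:ℝ) ≤ 2)]

lemma stdNormal_sqrt {μ σ y : ℝ} (hy : 0 ≤ y) :
    stdNormal (Real.sqrt y * μ / σ) =
      (1 / Real.sqrt (2*Real.pi)) * Real.exp (-(y * (μ/σ)^2) / 2) := by
  unfold stdNormal
  rw [show (Real.sqrt y * μ / σ)^2 = y * (μ/σ)^2 by
    rw [div_pow, mul_pow, Real.sq_sqrt hy]; ring]

lemma stdNormal_nonneg (z : ℝ) : 0 ≤ stdNormal z := by
  unfold stdNormal; positivity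

lemma erf_inner_continuous {μ σ : ℝ} :
    Continuous (fun y : ℝ => erf (Real.sqrt (y/2) * μ / σ)) := by
  exact erf_continuous.comp (((Real.continuous_sqrt.comp
    (continuous_id.div_const 2)).mul continuous_const).div_const σ)

lemma I1_eval {μ σ c : ℝ} (hμ : 0 < μ) (hσ : 0 < σ) (hc : 0 < c) :
    (∫ y in (0:ℝ)..c, (1 / Real.sqrt y) * stdNormal (Real.sqrt y * μ / σ))
      = (σ/μ) * erf (Real.sqrt (c/2) * μ / σ) := by
  set f₁ : ℝ → ℝ := fun y => (1 / Real.sqrt y) * stdNormal (Real.sqrt y * μ / σ) with hf₁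
  set G : ℝ → ℝ := fun y => (σ/μ) * erf (Real.sqrt (y/2) * μ / σ) with hG
  have hGcont : ContinuousOn G (Icc 0 c) :=
    (continuous_const.mul erf_inner_continuous).continuousOn
  have hGderiv : ∀ x ∈ Ioo (0:ℝ) c, HasDerivAt G (f₁ x) x := by
    intro x hx
    have h := (erf_comp_hasDerivAt hμ hσ hx.1).const_mul (σ/μ)
    refine h.congr_deriv ?_
    symm
    rw [hf₁]
    simp only
    rw [stdNormal_sqrt hx.1.le]
    have hμ' : μ ≠ 0 := hμ.ne'
    have hσ' : σ ≠ 0 := hσ.ne'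
    have hx0 : Real.sqrt x ≠ 0 := by have := hx.1; positivity
    have h2π0 : Real.sqrt (2*Real.pi) ≠ 0 := by positivity
    field_simp
  have hint : IntervalIntegrable f₁ volume 0 c := by
    rw [intervalIntegrable_iff_integrableOn_Ioc_of_le hc.le]
    apply integrableOn_deriv_right_of_nonneg hGcont
      (fun x hx => (hGderiv x hx).hasDerivWithinAt)
    intro x hx
    have := stdNormal_nonneg (Real.sqrt x * μ / σ)
    have : 0 ≤ 1 / Real.sqrt x := by positivity
    rw [hf₁]
    positivity
  have := integral_eq_sub_of_hasDeriv_right_of_le hc.le hGcont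
    (fun x hx => (hGderiv x hx).hasDerivWithinAt) hint
  rw [this, hG]
  simp [erf_zero]

lemma stdNormal_continuous : Continuous stdNormal := by
  unfold stdNormal; continuity

lemma H_hasDerivAt {μ σ : ℝ} (hμ : 0 < μ) (hσ : 0 < σ) {y : ℝ} (hy : 0 < y) :
    HasDerivAt (fun y => (2*σ/μ) * (Real.sqrt y * stdNormal (Real.sqrt y * μ/σ))
        + (y - σ^2/μ^2) * erf (Real.sqrt (y/2) * μ / σ))
      (erf (Real.sqrt (y/2) * μ / σ)) y := by
  set q : ℝ := (μ/σ)^2 with hq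
  set K : ℝ := 1 / Real.sqrt (2*Real.pi) with hK
  have hsq : HasDerivAt Real.sqrt (1/(2*Real.sqrt y)) y := Real.hasDerivAt_sqrt hy.ne'
  have hlin : HasDerivAt (fun y : ℝ => -(y*q)/2) (-(1*q)/2) y :=
    (((hasDerivAt_id y).mul_const q).neg).div_const 2
  have hexp : HasDerivAt (fun y : ℝ => Real.exp (-(y*q)/2))
      (Real.exp (-(y*q)/2) * (-(1*q)/2)) y := hlin.exp
  have hKexp := hexp.const_mul K
  have hterm1 := (hsq.mul hKexp).const_mul (2*σ/μ)
  have hterm2 := ((hasDerivAt_id y).sub_const (σ^2/μ^2)).mul (erf_comp_hasDerivAt hμ hσ hy)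
  have total := hterm1.add hterm2
  have heq : (fun y => (2*σ/μ) * (Real.sqrt y * stdNormal (Real.sqrt y * μ/σ))
        + (y - σ^2/μ^2) * erf (Real.sqrt (y/2) * μ / σ))
      =ᶠ[nhds y] (fun y => (2*σ/μ) * (Real.sqrt y * (K * Real.exp (-(y*q)/2)))
        + (y - σ^2/μ^2) * erf (Real.sqrt (y/2) * μ / σ)) := by
    filter_upwards [Ioi_mem_nhds hy] with x hx
    rw [stdNormal_sqrt (le_of_lt hx)]
  rw [show (fun y => (2*σ/μ) * (Real.sqrt y * (K * Real.exp (-(y*q)/2)))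
        + (y - σ^2/μ^2) * erf (Real.sqrt (y/2) * μ / σ))
      = (fun x => 2 * σ / μ * (Real.sqrt x * (K * Real.exp (-(x * q) / 2)))
        + (x - σ ^ 2 / μ ^ 2) * erf (Real.sqrt (x / 2) * μ / σ)) from rfl] at heq
  apply HasDerivAt.congr_of_eventuallyEq _ heq
  refine total.congr_deriv ?_
  symm
  -- scalar identity
  have hμ' : μ ≠ 0 := hμ.ne'
  have hσ' : σ ≠ 0 := hσ.ne'
  have hy0 : Real.sqrt y ≠ 0 := by positivity
  have h20 : Real.sqrt 2 ≠ 0 := by positivity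
  have hπ0 : Real.sqrt Real.pi ≠ 0 := by positivity
  have h2π : Real.sqrt (2*Real.pi) = Real.sqrt 2 * Real.sqrt Real.pi :=
    Real.sqrt_mul (by norm_num) _
  have hss : Real.sqrt y * Real.sqrt y = y := Real.mul_self_sqrt hy.le
  have h22 : Real.sqrt 2 * Real.sqrt 2 = 2 := Real.mul_self_sqrt (by norm_num)
  rw [hK, h2π, hq]
  simp only [id_eq]
  set E := Real.exp (-(y*(μ/σ)^2)/2) with hE
  rw [← hss]
  field_simp
  ring_nf
  rw [Real.sqrt_sq (Real.sqrt_nonneg y)]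
  ring

lemma J_eval {μ σ c : ℝ} (hμ : 0 < μ) (hσ : 0 < σ) (hc : 0 < c) :
    (∫ y in (0:ℝ)..c, erf (Real.sqrt (y/2) * μ / σ))
      = (2*σ/μ) * (Real.sqrt c * stdNormal (Real.sqrt c * μ/σ))
        + (c - σ^2/μ^2) * erf (Real.sqrt (c/2) * μ / σ) := by
  set H : ℝ → ℝ := fun y => (2*σ/μ) * (Real.sqrt y * stdNormal (Real.sqrt y * μ/σ))
        + (y - σ^2/μ^2) * erf (Real.sqrt (y/2) * μ / σ) with hH
  have hcont : ContinuousOn H (Icc 0 c) := by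
    apply Continuous.continuousOn
    apply Continuous.add
    · exact continuous_const.mul (Real.continuous_sqrt.mul
        (stdNormal_continuous.comp ((Real.continuous_sqrt.mul continuous_const).div_const σ)))
    · exact ((continuous_id.sub continuous_const)).mul erf_inner_continuous
  have hint : IntervalIntegrable (fun y => erf (Real.sqrt (y/2) * μ / σ)) volume 0 c :=
    erf_inner_continuous.intervalIntegrable _ _
  have hftc := integral_eq_sub_of_hasDeriv_right_of_le hc.le hcont
    (fun x hx => (H_hasDerivAt hμ hσ hx.1).hasDerivWithinAt) hint
  rw [hftc, hH]
  simp [erf_zero]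

theorem expected_first_passage_time_formula
    (μ σ c : ℝ) (hμ : 0 < μ) (hσ : 0 < σ) (hc : 0 < c) :
    σ * (∫ y in (0 : ℝ)..c, (1 / Real.sqrt y) * stdNormal (Real.sqrt y * μ / σ)) +
        (μ / 2) * (∫ y in (0 : ℝ)..c, erfc (-Real.sqrt (y / 2) * μ / σ))
      = c * μ / 2 + σ * Real.sqrt c * stdNormal (Real.sqrt c * μ / σ) +
          ((c * μ ^ 2 + σ ^ 2) / (2 * μ)) * erf (Real.sqrt (c / 2) * μ / σ) := by
  have hμ' : μ ≠ 0 := hμ.ne'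
  have h2 : (∫ y in (0:ℝ)..c, erfc (-Real.sqrt (y/2) * μ / σ))
      = c + ∫ y in (0:ℝ)..c, erf (Real.sqrt (y/2) * μ / σ) := by
    have hcong : ∀ y : ℝ, erfc (-Real.sqrt (y/2) * μ / σ)
        = 1 + erf (Real.sqrt (y/2) * μ / σ) := by
      intro y
      rw [show -Real.sqrt (y/2) * μ / σ = -(Real.sqrt (y/2) * μ / σ) by ring,
        erfc_eq, erf_neg]
      ring
    rw [intervalIntegral.integral_congr (g := fun y => 1 + erf (Real.sqrt (y/2)*μ/σ))
      (fun y _ => hcong y)]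
    rw [intervalIntegral.integral_add intervalIntegrable_const
      (erf_inner_continuous.intervalIntegrable _ _)]
    simp
  rw [I1_eval hμ hσ hc, h2, J_eval hμ hσ hc]
  field_simp
  ring
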